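/- Let R be a commutative ring and let I_1,...,I_l and J_1,...,J_l be ideals of R such that I_i ⊆ J_j whenever i ≠ j. Then ⋂_{i=1}^l (I_i + J_i) = I_1 + ... + I_l + ⋂_{i=1}^l J_i. -/
import Mathlib

lemma niermann_key {R : Type*} [CommRing R] {A B C D : Ideal R}
    (h1 : C ≤ B) (h2 : A ≤ D) :
    (A + B) ⊓ (C + D) = A + (C + (B ⊓ D)) := by
  apply le_antisymm
  · rintro x ⟨hx1, hx2⟩
    obtain ⟨a, ha, b, hb, rfl⟩ := Submodule.mem_sup.mp hx1
    obtain ⟨c, hc, d, hd, hcd⟩ := Submodule.mem_sup.mp hx2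
    refine Submodule.mem_sup.mpr ⟨a, ha, c + (b - c), ?_, by ring⟩
    refine Submodule.mem_sup.mpr ⟨c, hc, b - c, ⟨sub_mem hb (h1 hc), ?_⟩, rfl⟩
    have hbc : b - c = d - a := by linear_combination -hcd
    rw [hbc]; exact sub_mem hd (h2 ha)
  · refine sup_le ?_ (sup_le ?_ ?_)
    · exact le_inf le_sup_left (le_trans h2 le_sup_right)
    · exact le_inf (le_trans h1 le_sup_right) le_sup_left
    · exact le_inf (le_trans inf_le_left le_sup_right)
        (le_trans inf_le_right le_sup_right)

lemma niermann_aux {R : Type*} [CommRing R] {ι : Type*} [DecidableEq ι]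
    (I J : ι → Ideal R) (s : Finset ι)
    (h : ∀ i ∈ s, ∀ j ∈ s, i ≠ j → I i ≤ J j) :
    s.inf (fun i => I i + J i) = (∑ i ∈ s, I i) + s.inf J := by
  induction s using Finset.induction_on with
  | empty => simp
  | @insert a s ha ih =>
    have hsub : ∀ i ∈ s, ∀ j ∈ s, i ≠ j → I i ≤ J j := fun i hi j hj hij =>
      h i (Finset.mem_insert_of_mem hi) j (Finset.mem_insert_of_mem hj) hij
    have h1 : (∑ i ∈ s, I i) ≤ J a := by
      rw [Ideal.sum_eq_sup]
      exact Finset.sup_le fun i hi =>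
        h i (Finset.mem_insert_of_mem hi) a (Finset.mem_insert_self a s)
          (fun he => ha (he ▸ hi))
    have h2 : I a ≤ s.inf J :=
      Finset.le_inf fun j hj =>
        h a (Finset.mem_insert_self a s) j (Finset.mem_insert_of_mem hj)
          (fun he => ha (he ▸ hj))
    rw [Finset.inf_insert, Finset.inf_insert, Finset.sum_insert ha, ih hsub,
      niermann_key h1 h2, add_assoc]

/-- Niermann's lemma: if `I i ⊆ J j` for all `i ≠ j`, then
`⋂ i (I i + J i) = (∑ i, I i) + ⋂ i, J i`. -/
theorem niermann_lemma {R : Type*} [CommRing R] (l : ℕ)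
    (I J : Fin l → Ideal R) (h : ∀ i j, i ≠ j → I i ≤ J j) :
    ⨅ i, (I i + J i) = (∑ i, I i) + ⨅ i, J i := by
  have := niermann_aux I J Finset.univ (fun i _ j _ hij => h i j hij)
  simpa [Finset.inf_eq_iInf] using this
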